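/- Let n ≥ 1 and let α = 1/√(n+2). Define γ0 = α/2 − α³/(2(1+α)²), γ2 = 1/(2α) + α/(1+α)², γ4 = 1/(2α(1+α)²). Then for all u ∈ [−1, 1], |u| ≤ γ0 + γ2·u² − γ4·u⁴. -/
import Mathlib


theorem stmt_0 (n : ℕ) (hn : 1 ≤ n) (α γ0 γ2 γ4 : ℝ)
    (hα : α = 1 / Real.sqrt (n + 2))
    (h0 : γ0 = α / 2 - α ^ 3 / (2 * (1 + α) ^ 2))
    (h2 : γ2 = 1 / (2 * α) + α / (1 + α) ^ 2)
    (h4 : γ4 = 1 / (2 * α * (1 + α) ^ 2)) :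
    ∀ u ∈ Set.Icc (-1 : ℝ) 1, |u| ≤ γ0 + γ2 * u ^ 2 - γ4 * u ^ 4 := by
  have hs : 0 < Real.sqrt (n + 2) := Real.sqrt_pos.mpr (by positivity)
  have hαpos : 0 < α := by rw [hα]; positivity
  have h1α : (0:ℝ) < 1 + α := by linarith
  intro u hu
  set t := |u| with ht
  have ht0 : 0 ≤ t := abs_nonneg u
  have ht1 : t ≤ 1 := abs_le.mpr ⟨hu.1, hu.2⟩
  have hu2 : u ^ 2 = t ^ 2 := (sq_abs u).symm
  have hu4 : u ^ 4 = t ^ 4 := by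
    rw [show (4:ℕ) = 2 * 2 from rfl, pow_mul, pow_mul, hu2]
  rw [hu2, hu4]
  have key : γ0 + γ2 * t ^ 2 - γ4 * t ^ 4 - t
      = (t - α) ^ 2 * (1 - t) * (1 + t + 2 * α) / (2 * α * (1 + α) ^ 2) := by
    subst h0 h2 h4
    field_simp
    ring
  have hpos : 0 ≤ (t - α) ^ 2 * (1 - t) * (1 + t + 2 * α) / (2 * α * (1 + α) ^ 2) := by
    apply div_nonneg
    · exact mul_nonneg (mul_nonneg (sq_nonneg _) (by linarith)) (by linarith)
    · positivity
  linarith [key ▸ hpos]
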